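/- Suppose there exist ρ > 0 and b : ℝ → ℝ continuous and strictly positive on (0, ρ] such that t ↦ (b t)⁻¹ is NOT Lebesgue integrable on (0, ρ) and ‖∇f x‖ ≤ b (f x) for every x with 0 < f x < ρ. Then for every p ∈ frontier Z there exist no ε > 0 and no curve γ : ℝ → E such that γ 0 = p, γ is continuous on [0, ε), f (γ t) > 0 for every t ∈ (0, ε), γ is differentiable at every t ∈ (0, ε), and ‖deriv γ t‖ ≤ 1 for every t ∈ (0, ε). -/

import Mathlib

open Set MeasureTheory

theorem no_curve_selection (n : ℕ) (hn : 1 ≤ n)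
    (f : EuclideanSpace ℝ (Fin n) → ℝ)
    (hf : Continuous f) (hf0 : ∀ x, 0 ≤ f x)
    (hZ : (f ⁻¹' {0}).Nonempty)
    (hC1 : ContDiffOn ℝ 1 f (f ⁻¹' {0})ᶜ)
    (ρ : ℝ) (hρ : 0 < ρ)
    (b : ℝ → ℝ) (hb_cont : ContinuousOn b (Ioc 0 ρ))
    (hb_pos : ∀ t ∈ Ioc (0:ℝ) ρ, 0 < b t)
    (hb_not_int : ¬ IntegrableOn (fun t => (b t)⁻¹) (Ioo 0 ρ))
    (hgrad : ∀ x, 0 < f x → f x < ρ → ‖gradient f x‖ ≤ b (f x)) :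
    ∀ p ∈ frontier (f ⁻¹' {0}),
      ¬ ∃ ε > (0:ℝ), ∃ γ : ℝ → EuclideanSpace ℝ (Fin n),
        γ 0 = p ∧ ContinuousOn γ (Ico 0 ε) ∧
        (∀ t ∈ Ioo (0:ℝ) ε, 0 < f (γ t)) ∧
        (∀ t ∈ Ioo (0:ℝ) ε, DifferentiableAt ℝ γ t) ∧
        (∀ t ∈ Ioo (0:ℝ) ε, ‖deriv γ t‖ ≤ 1) := by
  intro p hp
  rintro ⟨ε, hε, γ, hγ0, hγcont, hfpos, hγdiff, hγspeed⟩
  set Z := f ⁻¹' {0} with hZdef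
  have hZclosed : IsClosed Z := isClosed_singleton.preimage hf
  have hfp : f p = 0 := by
    have hpZ : p ∈ Z := hZclosed.closure_eq ▸ frontier_subset_closure hp
    exact hpZ
  -- the integrand
  set φ : ℝ → ℝ := fun u => (b u)⁻¹ with hφdef
  have hφcont : ContinuousOn φ (Ioc 0 ρ) :=
    hb_cont.inv₀ (fun t ht => (hb_pos t ht).ne')
  have hφnonneg : ∀ u ∈ Ioc (0:ℝ) ρ, 0 ≤ φ u :=
    fun u hu => le_of_lt (inv_pos.2 (hb_pos u hu))
  have hφint : ∀ s ∈ Ioc (0:ℝ) ρ, IntervalIntegrable φ volume s ρ := by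
    intro s hs
    apply ContinuousOn.intervalIntegrable
    rw [uIcc_of_le hs.2]
    exact hφcont.mono (fun u hu => ⟨lt_of_lt_of_le hs.1 hu.1, hu.2⟩)
  set Φ : ℝ → ℝ := fun s => ∫ u in s..ρ, φ u with hΦdef
  -- Φ is antitone on (0, ρ]
  have hΦanti : ∀ s₁ ∈ Ioc (0:ℝ) ρ, ∀ s₂ ∈ Ioc (0:ℝ) ρ, s₁ ≤ s₂ → Φ s₂ ≤ Φ s₁ := by
    intro s₁ hs₁ s₂ hs₂ h12
    have hadd : (∫ u in s₁..s₂, φ u) + (∫ u in s₂..ρ, φ u) = ∫ u in s₁..ρ, φ u := by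
      apply intervalIntegral.integral_add_adjacent_intervals
      · apply (hφint s₁ hs₁).mono_set
        rw [uIcc_of_le h12, uIcc_of_le hs₁.2]
        exact Icc_subset_Icc le_rfl hs₂.2
      · exact hφint s₂ hs₂
    have hnn : 0 ≤ ∫ u in s₁..s₂, φ u := by
      apply intervalIntegral.integral_nonneg h12
      intro u hu
      exact hφnonneg u ⟨lt_of_lt_of_le hs₁.1 hu.1, le_trans hu.2 hs₂.2⟩
    have h1 : Φ s₂ ≤ (∫ u in s₁..s₂, φ u) + (∫ u in s₂..ρ, φ u) := by
      show (∫ u in s₂..ρ, φ u) ≤ _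
      linarith
    rw [hadd] at h1
    exact h1
  -- Φ has derivative -φ s at every s ∈ (0, ρ)
  have hΦderiv : ∀ s ∈ Ioo (0:ℝ) ρ, HasDerivAt Φ (-(φ s)) s := by
    intro s hs
    have hmem : Ioc (0:ℝ) ρ ∈ nhds s := Ioc_mem_nhds hs.1 hs.2
    have hca : ContinuousAt φ s := hφcont.continuousAt hmem
    have hmeas : StronglyMeasurableAtFilter φ (nhds s) :=
      ⟨Ioc 0 ρ, hmem, (hφcont.mono (le_refl _)).aestronglyMeasurable measurableSet_Ioc⟩
    exact intervalIntegral.integral_hasDerivAt_left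
      (hφint s ⟨hs.1, le_of_lt hs.2⟩) hmeas hca
  -- the composed function g
  set g : ℝ → ℝ := fun t => f (γ t) with hgdef
  have hg0 : g 0 = 0 := by simp [hgdef, hγ0, hfp]
  have hgtend : Filter.Tendsto g (nhdsWithin 0 (Ico 0 ε)) (nhds 0) := by
    have h1 : ContinuousWithinAt γ (Ico 0 ε) 0 :=
      hγcont.continuousWithinAt ⟨le_refl 0, hε⟩
    have := (hf.continuousAt (x := γ 0)).tendsto.comp h1
    rw [hγ0, hfp] at this
    exact this
  -- small values of g near 0
  have hsmall : ∀ u, 0 < u → ∃ δ > (0:ℝ), ∀ t, 0 < t → t < δ → t < ε → g t < u := by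
    intro u hu
    have hev : {t | g t < u} ∈ nhdsWithin 0 (Ico 0 ε) := hgtend (Iio_mem_nhds hu)
    rw [Metric.mem_nhdsWithin_iff] at hev
    obtain ⟨δ, hδ, hsub⟩ := hev
    refine ⟨δ, hδ, fun t ht htδ htε => hsub ⟨?_, ht.le, htε⟩⟩
    simp [Real.dist_eq, abs_of_pos ht, htδ]
  -- choose t₁
  obtain ⟨δ, hδ, hδprop⟩ := hsmall ρ hρ
  set t₁ : ℝ := min (ε/2) (δ/2) with ht₁def
  have ht₁pos : 0 < t₁ := lt_min (by linarith) (by linarith)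
  have ht₁ε : t₁ < ε := lt_of_le_of_lt (min_le_left _ _) (by linarith)
  have hmem₁ : ∀ t ∈ Ioc (0:ℝ) t₁, t ∈ Ioo (0:ℝ) ε ∧ g t ∈ Ioo (0:ℝ) ρ := by
    intro t ht
    have htε : t < ε := lt_of_le_of_lt ht.2 ht₁ε
    have htδ : t < δ :=
      lt_of_le_of_lt (le_trans ht.2 (min_le_right _ _)) (by linarith)
    exact ⟨⟨ht.1, htε⟩, ⟨hfpos t ⟨ht.1, htε⟩, hδprop t ht.1 htδ htε⟩⟩
  -- derivative bound for h = Φ ∘ g on Icc s t₁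
  have key : ∀ s ∈ Ioc (0:ℝ) t₁, ‖Φ (g t₁) - Φ (g s)‖ ≤ t₁ := by
    intro s hs
    set h' : ℝ → ℝ := fun t => -(φ (g t)) * ((fderiv ℝ f (γ t)) (deriv γ t)) with hh'def
    have hders : ∀ t ∈ Icc s t₁, HasDerivWithinAt (fun t => Φ (g t)) (h' t) (Icc s t₁) t := by
      intro t ht
      have htIoc : t ∈ Ioc (0:ℝ) t₁ := ⟨lt_of_lt_of_le hs.1 ht.1, ht.2⟩
      obtain ⟨htε, hgt⟩ := hmem₁ t htIoc
      have hγ' : HasDerivAt γ (deriv γ t) t := (hγdiff t htε).hasDerivAt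
      have hxZ : γ t ∈ Zᶜ := by
        intro hmem
        exact (ne_of_gt hgt.1) (by exact hmem)
      have hfd : DifferentiableAt ℝ f (γ t) :=
        ((hC1.contDiffAt (hZclosed.isOpen_compl.mem_nhds hxZ)).differentiableAt one_ne_zero)
      have hg' : HasDerivAt g ((fderiv ℝ f (γ t)) (deriv γ t)) t :=
        hfd.hasFDerivAt.comp_hasDerivAt t hγ'
      have hΦ' : HasDerivAt Φ (-(φ (g t))) (g t) := hΦderiv (g t) hgt
      exact ((hΦ'.comp t hg')).hasDerivWithinAt
    have hbound : ∀ t ∈ Icc s t₁, ‖h' t‖ ≤ 1 := by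
      intro t ht
      have htIoc : t ∈ Ioc (0:ℝ) t₁ := ⟨lt_of_lt_of_le hs.1 ht.1, ht.2⟩
      obtain ⟨htε, hgt⟩ := hmem₁ t htIoc
      have hbpos : 0 < b (g t) := hb_pos _ ⟨hgt.1, le_of_lt hgt.2⟩
      have hgradnorm : ‖fderiv ℝ f (γ t)‖ ≤ b (g t) := by
        have := hgrad (γ t) hgt.1 hgt.2
        rwa [show ‖gradient f (γ t)‖ = ‖fderiv ℝ f (γ t)‖ from
          (InnerProductSpace.toDual ℝ _).symm.norm_map _] at this
      have hD : ‖(fderiv ℝ f (γ t)) (deriv γ t)‖ ≤ b (g t) := by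
        calc ‖(fderiv ℝ f (γ t)) (deriv γ t)‖
            ≤ ‖fderiv ℝ f (γ t)‖ * ‖deriv γ t‖ := (fderiv ℝ f (γ t)).le_opNorm _
          _ ≤ b (g t) * 1 := mul_le_mul hgradnorm (hγspeed t htε) (norm_nonneg _) hbpos.le
          _ = b (g t) := mul_one _
      have hnormeq : ‖h' t‖ = (b (g t))⁻¹ * ‖(fderiv ℝ f (γ t)) (deriv γ t)‖ := by
        rw [hh'def]
        simp only [norm_mul, norm_neg]
        congr 1
        exact Real.norm_of_nonneg (inv_nonneg.2 hbpos.le)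
      rw [hnormeq]
      calc (b (g t))⁻¹ * ‖(fderiv ℝ f (γ t)) (deriv γ t)‖
          ≤ (b (g t))⁻¹ * b (g t) := by
            apply mul_le_mul_of_nonneg_left hD (inv_pos.2 hbpos).le
        _ = 1 := inv_mul_cancel₀ hbpos.ne'
    have := (convex_Icc s t₁).norm_image_sub_le_of_norm_hasDerivWithin_le
      hders hbound ⟨le_refl s, hs.2⟩ ⟨hs.2, le_refl t₁⟩
    calc ‖Φ (g t₁) - Φ (g s)‖ ≤ 1 * ‖t₁ - s‖ := this
      _ = |t₁ - s| := by rw [one_mul]; rfl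
      _ ≤ t₁ := by rw [abs_of_nonneg (by linarith [hs.1, hs.2])]; linarith [hs.1]
  -- Φ is bounded on (0, ρ)
  set C : ℝ := Φ (g t₁) + t₁ with hCdef
  have hΦbdd : ∀ u ∈ Ioo (0:ℝ) ρ, Φ u ≤ C := by
    intro u hu
    -- find s with g s < u
    obtain ⟨δ', hδ', hδ'prop⟩ := hsmall u hu.1
    set s : ℝ := min (δ'/2) t₁ with hsdef
    have hspos : 0 < s := lt_min (by linarith) ht₁pos
    have hsIoc : s ∈ Ioc (0:ℝ) t₁ := ⟨hspos, min_le_right _ _⟩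
    have hsδ' : s < δ' :=
      lt_of_le_of_lt (min_le_left _ _) (by linarith)
    have hgs_lt : g s < u := hδ'prop s hspos hsδ' (lt_of_le_of_lt hsIoc.2 ht₁ε)
    obtain ⟨_, hgs⟩ := hmem₁ s hsIoc
    have h1 : Φ u ≤ Φ (g s) :=
      hΦanti (g s) ⟨hgs.1, hgs.2.le⟩ u ⟨hu.1, hu.2.le⟩ hgs_lt.le
    have h2 : Φ (g s) ≤ Φ (g t₁) + t₁ := by
      have := key s hsIoc
      have := abs_le.1 this
      linarith [this.1, this.2, abs_le.1 (key s hsIoc) |>.1]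
    exact le_trans h1 h2
  -- contradiction with non-integrability
  apply hb_not_int
  have hIoc : IntegrableOn (fun t => (b t)⁻¹) (Ioc 0 ρ) := by
    set a : ℕ → ℝ := fun k => ρ / (k + 2) with hadef
    have hak : ∀ k, a k ∈ Ioo (0:ℝ) ρ := by
      intro k
      constructor
      · apply div_pos hρ; positivity
      · rw [div_lt_iff₀ (by positivity)]
        nlinarith [Nat.cast_nonneg (α := ℝ) k]
    have hatend : Filter.Tendsto a Filter.atTop (nhds 0) := by
      apply Filter.Tendsto.div_atTop (tendsto_const_nhds)
      apply Filter.tendsto_atTop_add_const_right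
      exact tendsto_natCast_atTop_atTop
    refine MeasureTheory.integrableOn_Ioc_of_intervalIntegral_norm_bounded_left (I := C)
      (a := a) (fun k => ?_) hatend ?_
    · have := (hφint (a k) ⟨(hak k).1, (hak k).2.le⟩)
      exact (intervalIntegrable_iff_integrableOn_Ioc_of_le (hak k).2.le).1 this
    filter_upwards with k
    have heq : (∫ x in Ioc (a k) ρ, ‖(b x)⁻¹‖) = ∫ x in Ioc (a k) ρ, (b x)⁻¹ := by
      apply setIntegral_congr_fun measurableSet_Ioc
      intro x hx
      exact Real.norm_of_nonneg (hφnonneg x ⟨lt_trans (hak k).1 hx.1, hx.2⟩)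
    rw [heq, ← intervalIntegral.integral_of_le (hak k).2.le]
    exact hΦbdd (a k) (hak k)
  exact hIoc.mono_set Ioo_subset_Ioc_self
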